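/- arXiv:2510.03946 — 2 statements merged into one kernel-verified Lean document; each statement's English description precedes it below -/
import Mathlib

section
/- Let A be a commutative local ring whose residue field k = A/m_A has more than 3 elements. Equip the additive group of A with the action of the unit group A^× given by a · x = a²x. Then the group homology H_i(A^×, A) vanishes for every i ≥ 0 (in particular the coinvariants A_{A^×} = H_0(A^×, A) are zero). -/
open CategoryTheory

noncomputable section

namespace SchurPaper

variable (k G : Type) [CommRing k] [Group G]

/-- The underlying linear map of a morphism of representations. -/
def homL {M N : Rep k G} (f : M ⟶ N) : (M : Type) →ₗ[k] (N : Type) := f.hom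

@[simp] lemma homL_apply {M N : Rep k G} (f : M ⟶ N) (x : M) : homL k G f x = f.hom x := rfl

/-- The submodule of `M` generated by the elements `ρ(g)(m) - m`; the coinvariants of the
representation `M` are the quotient of `M` by this submodule. -/
def coinvRel (M : Rep k G) : Submodule k M :=
  Submodule.span k (Set.range fun gm : G × M => M.ρ gm.1 gm.2 - gm.2)

lemma coinvRel_le {M N : Rep k G} (f : M ⟶ N) :
    coinvRel k G M ≤ (coinvRel k G N).comap (homL k G f) := by
  rw [coinvRel, Submodule.span_le]
  rintro x ⟨⟨g, m⟩, rfl⟩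
  simp only [Set.mem_preimage, SetLike.mem_coe, Submodule.mem_comap, map_sub, homL_apply]
  rw [Rep.hom_comm_apply]
  exact Submodule.subset_span ⟨(g, f.hom m), rfl⟩

/-- The coinvariants functor `Rep k G ⥤ ModuleCat k`, sending a representation `M` to
its module of coinvariants `M_G = H₀(G, M)`. -/
def coinvFunctor : Rep k G ⥤ ModuleCat k where
  obj M := ModuleCat.of k (M ⧸ coinvRel k G M)
  map {M N} f := ModuleCat.ofHom (Submodule.mapQ _ _ (homL k G f) (coinvRel_le k G f))
  map_id M := by
    apply ModuleCat.hom_ext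
    apply Submodule.linearMap_qext
    ext x
    simp [Submodule.mapQ_apply, homL]
  map_comp f g := by
    apply ModuleCat.hom_ext
    apply Submodule.linearMap_qext
    ext x
    simp [Submodule.mapQ_apply, homL]

instance : (coinvFunctor k G).Additive where
  map_add := by
    intros X Y f g
    apply ModuleCat.hom_ext
    apply Submodule.linearMap_qext
    ext x
    rfl

/-- The chain complex computing the homology of `G` with (trivial) coefficients in `k`:
the coinvariants of the standard projective resolution of `k` as a trivial
`G`-representation. -/
def stdComplex : ChainComplex (ModuleCat k) ℕ :=
  ((coinvFunctor k G).mapHomologicalComplex (ComplexShape.down ℕ)).obj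
    (Rep.standardComplex k G)

/-- The `n`-th homology of the group `G` with trivial coefficients in `k`, defined as
the `n`-th homology of the complex of coinvariants of the standard projective resolution
of `k` over `k[G]`.  For `k = ℤ`, `groupHomology ℤ G 2` is the Schur multiplier of `G`. -/
def groupHomology (n : ℕ) : ModuleCat k :=
  (stdComplex k G).homology n

end SchurPaper


open SchurPaper

/-- The representation of the unit group `Aˣ` on the additive group of `A` given by
`a · x = a² x`. -/
def squareRep (A : Type) [CommRing A] : Representation ℤ Aˣ A where
  toFun g := LinearMap.mulLeft ℤ ((g : A) ^ 2)
  map_one' := by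
    ext x
    simp
  map_mul' g h := by
    ext x
    simp only [LinearMap.mulLeft_apply, Module.End.mul_apply, Units.val_mul]
    ring

namespace SchurHelper

open SchurPaper

variable {k : Type} [CommRing k] {G : Type} [CommGroup G]

/-- The action of a group element as an endomorphism of a representation (valid since
`G` is commutative). -/
def actHom (M : Rep k G) (g : G) : M ⟶ M :=
  ConcreteCategory.ofHom (C := Rep k G) ⟨M.ρ g, fun h => by
    ext x
    show M.ρ g (M.ρ h x) = M.ρ h (M.ρ g x)
    rw [← Module.End.mul_apply, ← Module.End.mul_apply, ← map_mul, ← map_mul, mul_comm]⟩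

@[simp] lemma actHom_hom_apply (M : Rep k G) (g : G) (x : M) :
    (actHom M g).hom x = M.ρ g x := rfl

lemma coinvFunctor_map_actHom (M : Rep k G) (g : G) :
    (coinvFunctor k G).map (actHom M g) = 𝟙 ((coinvFunctor k G).obj M) := by
  apply ModuleCat.hom_ext
  apply Submodule.linearMap_qext
  ext x
  show (coinvRel k G M).mkQ (M.ρ g x) = (coinvRel k G M).mkQ x
  rw [Submodule.mkQ_apply, Submodule.mkQ_apply]
  refine (Submodule.Quotient.eq _).2 ?_
  exact Submodule.subset_span ⟨(g, x), rfl⟩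

lemma actHom_naturality {N N' : Rep k G} (ψ : N ⟶ N') (g : G) :
    actHom N g ≫ ψ = ψ ≫ actHom N' g := by
  ext x
  change ψ.hom (N.ρ g x) = N'.ρ g (ψ.hom x)
  exact Rep.hom_comm_apply ψ g x

/-- The action of a group element as an endomorphism of a chain complex of
representations. -/
def chainAct (P : ChainComplex (Rep k G) ℕ) (g : G) : P ⟶ P where
  f n := actHom (P.X n) g
  comm' i j _ := by
    ext x
    change (P.d i j).hom ((P.X i).ρ g x) = (P.X j).ρ g ((P.d i j).hom x)
    exact Rep.hom_comm_apply (P.d i j) g x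

lemma leftDerived_map_eq_zero (M : Rep k G) (g : G) (f : M ⟶ M)
    (hf : f = actHom M g - 𝟙 M) (n : ℕ) :
    ((coinvFunctor k G).leftDerived n).map f = 0 := by
  obtain ⟨P⟩ := (HasProjectiveResolution.out (Z := M))
  have comm : (chainAct P.complex g - 𝟙 P.complex).f 0 ≫ P.π.f 0 = P.π.f 0 ≫ f := by
    subst hf
    rw [HomologicalComplex.sub_f_apply, HomologicalComplex.id_f, Preadditive.sub_comp]
    erw [Preadditive.comp_sub]
    rw [Category.id_comp]
    congr 1
    exact actHom_naturality (P.π.f 0) g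
  have hzero : ((coinvFunctor k G).mapHomologicalComplex (ComplexShape.down ℕ)).map
      (chainAct P.complex g - 𝟙 P.complex) = 0 := by
    apply HomologicalComplex.hom_ext
    intro m
    rw [HomologicalComplex.zero_f]
    have h1 : (((coinvFunctor k G).mapHomologicalComplex (ComplexShape.down ℕ)).map
        (chainAct P.complex g - 𝟙 P.complex)).f m =
        (coinvFunctor k G).map ((chainAct P.complex g - 𝟙 P.complex).f m) := rfl
    rw [h1, HomologicalComplex.sub_f_apply, HomologicalComplex.id_f]
    have h2 : (chainAct P.complex g).f m = actHom (P.complex.X m) g := rfl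
    rw [h2, Functor.map_sub, coinvFunctor_map_actHom, CategoryTheory.Functor.map_id, sub_self]
    rfl
  have hnat := ProjectiveResolution.isoLeftDerivedObj_hom_naturality f P P
    (chainAct P.complex g - 𝟙 P.complex) comm (coinvFunctor k G) n
  rw [Functor.comp_map, hzero, CategoryTheory.Functor.map_zero, Limits.comp_zero] at hnat
  rw [← cancel_mono (P.isoLeftDerivedObj (coinvFunctor k G) n).hom, hnat, Limits.zero_comp]

end SchurHelper

section MainProof

open SchurHelper IsLocalRing

lemma exists_good_unit (A : Type) [CommRing A] [IsLocalRing A]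
    (h : 3 < Cardinal.mk (IsLocalRing.ResidueField A)) :
    ∃ u : Aˣ, IsUnit ((u : A) ^ 2 - 1) := by
  obtain ⟨r, hr0, hr1, hrm⟩ :
      ∃ r : ResidueField A, r ≠ 0 ∧ r ≠ 1 ∧ r ≠ -1 := by
    by_contra hcon
    push_neg at hcon
    have hsurj : Function.Surjective
        (fun i : Fin 3 => (![0, 1, -1] : Fin 3 → ResidueField A) i) := by
      intro r
      by_cases h0 : r = 0
      · exact ⟨0, by simp [h0]⟩
      by_cases h1 : r = 1
      · exact ⟨1, by simp [h1]⟩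
      · exact ⟨2, by simp [hcon r h0 h1]⟩
    have := Cardinal.mk_le_of_surjective hsurj
    rw [Cardinal.mk_fin] at this
    have : Cardinal.mk (ResidueField A) ≤ 3 := by
      refine this.trans ?_
      norm_num
    exact absurd h (not_lt.2 this)
  obtain ⟨a, ha⟩ := Ideal.Quotient.mk_surjective (I := maximalIdeal A) r
  have ha' : residue A a = r := ha
  have hu : IsUnit a := by
    refine isUnit_of_map_unit (residue A) a ?_
    rw [ha']
    exact isUnit_iff_ne_zero.2 hr0
  refine ⟨hu.unit, ?_⟩
  have h2 : IsUnit (residue A (a ^ 2 - 1)) := by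
    rw [map_sub, map_pow, map_one, ha']
    have : r ^ 2 - 1 = (r - 1) * (r + 1) := by ring
    rw [this]
    refine isUnit_iff_ne_zero.2 (mul_ne_zero (sub_ne_zero.2 hr1) ?_)
    intro hc
    exact hrm (eq_neg_of_add_eq_zero_left hc)
  have := isUnit_of_map_unit (residue A) _ h2
  rwa [hu.unit_spec]

lemma mulLeft_comp_comm (A : Type) [CommRing A] (a b : A) :
    (LinearMap.mulLeft ℤ a).comp (LinearMap.mulLeft ℤ b) =
      (LinearMap.mulLeft ℤ b).comp (LinearMap.mulLeft ℤ a) := by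
  rw [← LinearMap.mulLeft_mul, ← LinearMap.mulLeft_mul, mul_comm]

/-- Multiplication by a ring element, as an endomorphism of the square representation. -/
def mulLeftHom (A : Type) [CommRing A] (a : A) :
    Rep.of (squareRep A) ⟶ Rep.of (squareRep A) :=
  Rep.ofHom ⟨(LinearMap.mulLeft ℤ a : A →ₗ[ℤ] A),
    fun g => mulLeft_comp_comm A a ((Units.val g) ^ 2)⟩

lemma mulLeftHom_comp (A : Type) [CommRing A] (a b : A) :
    mulLeftHom A a ≫ mulLeftHom A b = mulLeftHom A (b * a) :=
  Rep.hom_ext (Representation.IntertwiningMap.ext (by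
    show (LinearMap.mulLeft ℤ b).comp (LinearMap.mulLeft ℤ a) = LinearMap.mulLeft ℤ (b * a)
    rw [LinearMap.mulLeft_mul]))

lemma mulLeftHom_one (A : Type) [CommRing A] :
    mulLeftHom A 1 = 𝟙 (Rep.of (squareRep A)) :=
  Rep.hom_ext (Representation.IntertwiningMap.ext (by
    show LinearMap.mulLeft ℤ (1 : A) = LinearMap.id
    rw [LinearMap.mulLeft_one]))

/-- Let `A` be a commutative local ring whose residue field has more than
`3` elements.  With `Aˣ` acting on the additive group of `A` by `a · x = a²x`, the group
homology `H_i(Aˣ, A)` (the `i`-th left derived functor of the coinvariants functor)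
vanishes for all `i ≥ 0`. -/
theorem homology_units_square_action_vanishes (A : Type) [CommRing A] [IsLocalRing A]
    (h : 3 < Cardinal.mk (IsLocalRing.ResidueField A)) (i : ℕ) :
    Subsingleton (((coinvFunctor ℤ Aˣ).leftDerived i).obj (Rep.of (squareRep A))) := by
  classical
  obtain ⟨u, hc⟩ := exists_good_unit A h
  set M : Rep ℤ Aˣ := Rep.of (squareRep A) with hM
  set c : A := (u : A) ^ 2 - 1 with hcdef
  set v : A := ((hc.unit⁻¹ : Aˣ) : A) with hvdef
  have hvc : v * c = 1 := hc.val_inv_mul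
  have hcv : c * v = 1 := hc.mul_val_inv
  let e : M ≅ M :=
    { hom := mulLeftHom A c
      inv := mulLeftHom A v
      hom_inv_id := by rw [mulLeftHom_comp, hvc, mulLeftHom_one]
      inv_hom_id := by rw [mulLeftHom_comp, hcv, mulLeftHom_one] }
  have hhom : e.hom = SchurHelper.actHom M u - 𝟙 M := by
    apply Rep.hom_ext
    apply Representation.IntertwiningMap.ext
    rw [sub_eq_add_neg]
    show (LinearMap.mulLeft ℤ c : A →ₗ[ℤ] A) =
      (squareRep A u : A →ₗ[ℤ] A) + -(LinearMap.id : A →ₗ[ℤ] A)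
    ext x
    show c * x = (u : A) ^ 2 * x + -x
    rw [hcdef]
    ring
  have hmap0 : ((coinvFunctor ℤ Aˣ).leftDerived i).map e.hom = 0 :=
    SchurHelper.leftDerived_map_eq_zero M u e.hom hhom i
  have hid : 𝟙 (((coinvFunctor ℤ Aˣ).leftDerived i).obj M) = 0 := by
    have h2 := (((coinvFunctor ℤ Aˣ).leftDerived i).mapIso e).hom_inv_id
    rw [Functor.mapIso_hom, hmap0, Limits.zero_comp] at h2
    exact h2.symm
  refine ⟨fun a b => ?_⟩
  calc a = (𝟙 (((coinvFunctor ℤ Aˣ).leftDerived i).obj M)) a := rfl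
    _ = (0 : ((coinvFunctor ℤ Aˣ).leftDerived i).obj M ⟶
          ((coinvFunctor ℤ Aˣ).leftDerived i).obj M) a := by rw [hid]
    _ = 0 := rfl
    _ = (0 : ((coinvFunctor ℤ Aˣ).leftDerived i).obj M ⟶
          ((coinvFunctor ℤ Aˣ).leftDerived i).obj M) b := rfl
    _ = (𝟙 (((coinvFunctor ℤ Aˣ).leftDerived i).obj M)) b := by rw [hid]
    _ = b := rfl

end MainProof
end
end

section
/- Let A be a commutative local ring with maximal ideal m_A and let I be the ideal of A generated by the set {a² − 1 : a ∈ A^×}. If the residue field A/m_A has more than 3 elements, then I = A. If A/m_A has exactly 3 elements, then I = m_A. -/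
/-- Let `A` be a commutative local ring and let `I` be the ideal generated
by `{a² − 1 : a ∈ Aˣ}`.  If the residue field has more than `3` elements then `I = A`;
if the residue field has exactly `3` elements then `I = m_A`. -/
theorem ideal_span_sq_sub_one (A : Type) [CommRing A] [IsLocalRing A] :
    (3 < Cardinal.mk (IsLocalRing.ResidueField A) →
      Ideal.span (Set.range fun a : Aˣ => (a : A) ^ 2 - 1) = ⊤) ∧
    (Nat.card (IsLocalRing.ResidueField A) = 3 →
      Ideal.span (Set.range fun a : Aˣ => (a : A) ^ 2 - 1) = IsLocalRing.maximalIdeal A) := by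
  set k := IsLocalRing.ResidueField A
  have hres : ∀ a : A, IsLocalRing.residue A a = 0 ↔ a ∈ IsLocalRing.maximalIdeal A := fun a =>
    Ideal.Quotient.eq_zero_iff_mem
  constructor
  · intro h3
    obtain ⟨x, hx⟩ : ∃ x : k, ¬(x = 0 ∨ x = 1 ∨ x = -1) := by
      by_contra h
      push_neg at h
      have hsurj : Function.Surjective (fun i : Fin 3 => (![0, 1, -1] : Fin 3 → k) i) := by
        intro x
        rcases h x with h0 | h1 | h2
        · exact ⟨0, h0.symm⟩
        · exact ⟨1, h1.symm⟩
        · exact ⟨2, h2.symm⟩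
      have := Cardinal.mk_le_of_surjective hsurj
      rw [Cardinal.mk_fin] at this
      exact absurd h3 (not_lt.2 (by exact_mod_cast this))
    push_neg at hx
    obtain ⟨hx0, hx1, hx2⟩ := hx
    obtain ⟨a, ha⟩ := IsLocalRing.residue_surjective (R := A) x
    have hau : IsUnit a := by
      rw [← IsLocalRing.notMem_maximalIdeal, ← hres]
      rw [ha]; exact hx0
    obtain ⟨u, hu⟩ := hau
    have hmem : (u : A) ^ 2 - 1 ∈ Ideal.span (Set.range fun a : Aˣ => (a : A) ^ 2 - 1) :=
      Ideal.subset_span ⟨u, rfl⟩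
    apply Ideal.eq_top_of_isUnit_mem _ hmem
    rw [← IsLocalRing.notMem_maximalIdeal, ← hres]
    rw [map_sub, map_pow, map_one, hu, ha]
    have : x ^ 2 - 1 = (x - 1) * (x + 1) := by ring
    rw [this]
    exact mul_ne_zero (sub_ne_zero.2 hx1) (fun h => hx2 (eq_neg_of_add_eq_zero_left h))
  · intro hcard
    haveI : Finite k := Nat.finite_of_card_ne_zero (by omega)
    haveI : Fintype k := Fintype.ofFinite k
    have hfcard : Fintype.card k = 3 := by rw [← Nat.card_eq_fintype_card, hcard]
    apply le_antisymm
    · rw [Ideal.span_le]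
      rintro _ ⟨u, rfl⟩
      show (u : A) ^ 2 - 1 ∈ IsLocalRing.maximalIdeal A
      rw [← hres, map_sub, map_pow, map_one]
      have hne : IsLocalRing.residue A (u : A) ≠ 0 := (u.isUnit.map _).ne_zero
      have := FiniteField.pow_card_sub_one_eq_one (IsLocalRing.residue A (u : A)) hne
      rw [hfcard] at this
      rw [show (3 : ℕ) - 1 = 2 from rfl] at this
      rw [this, sub_self]
    · intro m hm
      set I := Ideal.span (Set.range fun a : Aˣ => (a : A) ^ 2 - 1) with hI
      have h2k : (2 : k) ≠ 0 := by
        intro h2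
        have hd2 : addOrderOf (1 : k) ∣ 2 := addOrderOf_dvd_of_nsmul_eq_zero (by
          rw [nsmul_eq_mul]; simpa using h2)
        have hd3 : addOrderOf (1 : k) ∣ 3 := hcard ▸ addOrderOf_dvd_natCard (1 : k)
        have : addOrderOf (1 : k) = 1 := Nat.eq_one_of_dvd_coprimes (by norm_num) hd2 hd3
        exact one_ne_zero (AddMonoid.addOrderOf_eq_one_iff.mp this)
      have h2 : IsUnit (2 : A) := by
        by_contra hnot
        have hmem2 : (2 : A) ∈ IsLocalRing.maximalIdeal A :=
          (IsLocalRing.mem_maximalIdeal _).2 hnot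
        have := (hres 2).2 hmem2
        rw [map_ofNat] at this
        exact h2k this
      have h1p : IsUnit (1 + m) := by
        have := IsLocalRing.isUnit_one_sub_self_of_mem_nonunits (-m)
          ((IsLocalRing.mem_maximalIdeal _).1 ((IsLocalRing.maximalIdeal A).neg_mem hm))
        simpa [sub_neg_eq_add] using this
      have h1m : IsUnit (1 - m) := IsLocalRing.isUnit_one_sub_self_of_mem_nonunits m
        ((IsLocalRing.mem_maximalIdeal _).1 hm)
      obtain ⟨u1, hu1⟩ := h1p
      obtain ⟨u2, hu2⟩ := h1m
      obtain ⟨u3, hu3⟩ := h2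
      have e1 : (1 + m) ^ 2 - 1 ∈ I := Ideal.subset_span ⟨u1, by show (u1 : A) ^ 2 - 1 = _; rw [hu1]⟩
      have e2 : (1 - m) ^ 2 - 1 ∈ I := Ideal.subset_span ⟨u2, by show (u2 : A) ^ 2 - 1 = _; rw [hu2]⟩
      have e3 : (2 : A) ^ 2 - 1 ∈ I := Ideal.subset_span ⟨u3, by show (u3 : A) ^ 2 - 1 = _; rw [hu3]⟩
      have key : m = (((1 + m) ^ 2 - 1) - ((1 - m) ^ 2 - 1)) - ((2 : A) ^ 2 - 1) * m := by ring
      rw [key]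
      exact sub_mem (sub_mem e1 e2) (I.mul_mem_right m e3)
end
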